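/- Helly's theorem for CAT(0) spaces: Let U be a complete length metric space satisfying the CAT(0) comparison, and let (K_α)_{α ∈ ι} be an arbitrary family of closed, bounded, convex subsets of U. If ⋂_{α ∈ ι} K_α = ∅, then there is a finite subfamily α₁, …, α_n ∈ ι with K_{α₁} ∩ … ∩ K_{α_n} = ∅ (equivalently: if every finite subfamily has a common point, then the whole family has a common point). -/

import Mathlib

/-- Comparison angle (model angle for curvature `0`) at `p` between `x` and `y`. -/
noncomputable def cmpAngle {X : Type*} [MetricSpace X] (p x y : X) : ℝ :=
  Real.arccos ((dist p x ^ 2 + dist p y ^ 2 - dist x y ^ 2) / (2 * dist p x * dist p y))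

/-- The CBB(0) four-point comparison: curvature `≥ 0` in the sense of Alexandrov. -/
def CBB0Cmp (X : Type*) [MetricSpace X] : Prop :=
  ∀ p x₁ x₂ x₃ : X, p ≠ x₁ → p ≠ x₂ → p ≠ x₃ →
    cmpAngle p x₁ x₂ + cmpAngle p x₂ x₃ + cmpAngle p x₃ x₁ ≤ 2 * Real.pi

/-- The CAT(0) four-point comparison. -/
def CAT0Cmp (X : Type*) [MetricSpace X] : Prop :=
  ∀ p₁ p₂ x₁ x₂ : X, p₁ ≠ p₂ → p₁ ≠ x₁ → p₁ ≠ x₂ → p₂ ≠ x₁ → p₂ ≠ x₂ →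
    cmpAngle p₁ x₁ x₂ ≤ cmpAngle p₁ p₂ x₁ + cmpAngle p₁ p₂ x₂ ∨
    cmpAngle p₂ x₁ x₂ ≤ cmpAngle p₂ p₁ x₁ + cmpAngle p₂ p₁ x₂

/-- Midpoint characterization of the length condition (for complete spaces). -/
def LengthMid (X : Type*) [MetricSpace X] : Prop :=
  ∀ x y : X, ∀ ε : ℝ, 0 < ε → ∃ z : X,
    dist x z ≤ dist x y / 2 + ε ∧ dist z y ≤ dist x y / 2 + ε

/-- A geodesic from `p` to `q`, affinely parametrized by `[0,1]`. -/
def IsGeodesicP {X : Type*} [MetricSpace X] (γ : ℝ → X) (p q : X) : Prop :=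
  γ 0 = p ∧ γ 1 = q ∧
    ∀ s ∈ Set.Icc (0:ℝ) 1, ∀ t ∈ Set.Icc (0:ℝ) 1, dist (γ s) (γ t) = |s - t| * dist p q

/-- A metrically convex subset: together with any two points it contains
every point lying between them. -/
def MConvexSet {X : Type*} [MetricSpace X] (K : Set X) : Prop :=
  ∀ x ∈ K, ∀ y ∈ K, ∀ z : X, dist x z + dist z y = dist x y → z ∈ K

open Real

lemma arccos_anti {x y : ℝ} (h : x ≤ y) : Real.arccos y ≤ Real.arccos x := by
  simp only [Real.arccos_eq_pi_div_two_sub_arcsin]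
  linarith [Real.monotone_arcsin h]

lemma cos_lip (x y : ℝ) : |Real.cos x - Real.cos y| ≤ |x - y| := by
  rw [Real.cos_sub_cos]
  have h1 : |Real.sin ((x+y)/2)| ≤ 1 := Real.abs_sin_le_one _
  have h2 : |Real.sin ((x-y)/2)| ≤ |(x-y)/2| := Real.abs_sin_le_abs
  calc |(-2) * Real.sin ((x+y)/2) * Real.sin ((x-y)/2)|
      = 2 * |Real.sin ((x+y)/2)| * |Real.sin ((x-y)/2)| := by
        rw [abs_mul, abs_mul]; norm_num
    _ ≤ 2 * 1 * |(x-y)/2| := by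
        apply mul_le_mul _ h2 (abs_nonneg _) (by positivity)
        apply mul_le_mul_of_nonneg_left h1 (by norm_num)
    _ = |x - y| := by
        rw [abs_div]
        norm_num
        ring

lemma cos_mono_bound {θ φ A : ℝ} (hθ0 : 0 ≤ θ) (hθπ : θ ≤ π) (hφ0 : 0 ≤ φ)
    (hφπ : φ ≤ π) (hA : 0 ≤ A) (h : θ ≤ φ + A) : Real.cos φ - A ≤ Real.cos θ := by
  have hmem : min (φ + A) π ∈ Set.Icc (0:ℝ) π := ⟨le_min (by linarith) (by linarith), min_le_right _ _⟩
  have h1 : Real.cos (min (φ + A) π) ≤ Real.cos θ :=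
    Real.cos_le_cos_of_nonneg_of_le_pi hθ0 hmem.2 (le_min h hθπ)
  have h2 : |Real.cos (min (φ+A) π) - Real.cos φ| ≤ |min (φ+A) π - φ| := cos_lip _ _
  have h3 : φ ≤ min (φ+A) π := le_min (by linarith) hφπ
  have h4 : min (φ+A) π - φ ≤ A := by
    have := min_le_left (φ+A) π; linarith
  rw [abs_le] at h2
  rw [abs_of_nonneg (by linarith)] at h2
  linarith [h2.1]

section Basics
variable {U : Type*} [MetricSpace U]

lemma ratio_mem {p x y : U} (hpx : p ≠ x) (hpy : p ≠ y) :
    -1 ≤ (dist p x ^ 2 + dist p y ^ 2 - dist x y ^ 2) / (2 * dist p x * dist p y) ∧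
      (dist p x ^ 2 + dist p y ^ 2 - dist x y ^ 2) / (2 * dist p x * dist p y) ≤ 1 := by
  have ha : 0 < dist p x := dist_pos.2 hpx
  have hb : 0 < dist p y := dist_pos.2 hpy
  have h1 : |dist x p - dist y p| ≤ dist x y := abs_dist_sub_le x y p
  rw [dist_comm x p, dist_comm y p, abs_le] at h1
  have h2 : dist x y ≤ dist x p + dist p y := dist_triangle x p y
  rw [dist_comm x p] at h2
  have hc : 0 ≤ dist x y := dist_nonneg
  constructor
  · rw [le_div_iff₀ (by positivity)]
    nlinarith [h2, hc]
  · rw [div_le_one (by positivity)]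
    nlinarith [h1.1, h1.2, hc]

lemma cos_cmpAngle {p x y : U} (hpx : p ≠ x) (hpy : p ≠ y) :
    Real.cos (cmpAngle p x y) =
      (dist p x ^ 2 + dist p y ^ 2 - dist x y ^ 2) / (2 * dist p x * dist p y) :=
  Real.cos_arccos (ratio_mem hpx hpy).1 (ratio_mem hpx hpy).2

lemma law_of_cos {p x y : U} (hpx : p ≠ x) (hpy : p ≠ y) :
    dist x y ^ 2 = dist p x ^ 2 + dist p y ^ 2
      - 2 * dist p x * dist p y * Real.cos (cmpAngle p x y) := by
  rw [cos_cmpAngle hpx hpy]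
  have ha : 0 < dist p x := dist_pos.2 hpx
  have hb : 0 < dist p y := dist_pos.2 hpy
  field_simp
  ring

lemma cmpAngle_nonneg (p x y : U) : 0 ≤ cmpAngle p x y := Real.arccos_nonneg _

lemma cmpAngle_le_pi (p x y : U) : cmpAngle p x y ≤ π := Real.arccos_le_pi _

end Basics

set_option maxHeartbeats 1000000 in
lemma oneSide {U : Type*} [MetricSpace U] {y z x m : U} {ε : ℝ}
    (hyz : y ≠ z) (hxy : x ≠ y) (hym : y ≠ m)
    (hε : 0 < ε) (hεh : ε < dist y z / 2)
    (hm1 : dist y m ≤ dist y z / 2 + ε) (hm2 : dist m z ≤ dist y z / 2 + ε)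
    (hang : cmpAngle y x m ≤ cmpAngle y z x + cmpAngle y z m) :
    dist x m ^ 2 ≤ dist x y ^ 2 / 2 + dist x z ^ 2 / 2 - dist y z ^ 2 / 4 +
      (dist y z * ε + ε ^ 2 + (dist y x ^ 2 + dist y z ^ 2 + dist x z ^ 2) * ε / dist y z
        + dist y x * (dist y z + 2 * ε) *
          Real.arccos ((dist y z / 2 - ε) / (dist y z / 2 + ε))) := by
  have hyx : y ≠ x := hxy.symm
  set L : ℝ := dist y z with hLdef
  set a : ℝ := dist y x with hadef
  set b : ℝ := dist y m with hbdef
  set c : ℝ := dist x z with hcdef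
  set w : ℝ := dist x m with hwdef
  set q : ℝ := dist m z with hqdef
  set A : ℝ := Real.arccos ((L / 2 - ε) / (L / 2 + ε)) with hAdef
  have hL : 0 < L := dist_pos.2 hyz
  have ha : 0 < a := dist_pos.2 hyx
  have hb : 0 < b := dist_pos.2 hym
  have hq0 : 0 ≤ q := dist_nonneg
  have hc0 : 0 ≤ c := dist_nonneg
  have hA0 : 0 ≤ A := Real.arccos_nonneg _
  have htri : L ≤ b + q := dist_triangle y m z
  have hb2 : L / 2 - ε ≤ b := by linarith
  have hq2 : L / 2 - ε ≤ q := by linarith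
  have hzm : z ≠ m := by
    refine dist_pos.1 ?_
    rw [dist_comm z m]
    rw [← hqdef]
    linarith
  -- Step 1 : the angle `cmpAngle y z m` is at most `A`
  have step1 : cmpAngle y z m ≤ A := by
    have hQ : (L / 2 - ε) / (L / 2 + ε) ≤
        (dist y z ^ 2 + dist y m ^ 2 - dist z m ^ 2) / (2 * dist y z * dist y m) := by
      rw [div_le_div_iff₀ (by linarith) (by positivity)]
      have hzmq : dist z m = q := by rw [dist_comm z m]
      rw [hzmq, ← hLdef, ← hbdef]
      have t1 : (0:ℝ) ≤ (L/2+ε) * ((b - (L/2-ε)) * (b + (L/2-ε))) :=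
        mul_nonneg (by linarith) (mul_nonneg (by linarith) (by linarith))
      have t2 : (0:ℝ) ≤ (L/2+ε) * ((L/2+ε-q) * (L/2+ε+q)) :=
        mul_nonneg (by linarith) (mul_nonneg (by linarith) (by linarith))
      have t3 : (0:ℝ) ≤ 4*(L/2)*((L/2-ε)*(L/2+ε-b)) :=
        mul_nonneg (by linarith) (mul_nonneg (by linarith) (by linarith))
      nlinarith [t1, t2, t3]
    exact arccos_anti hQ
  -- Step 2: angle comparison
  have hθ : cmpAngle y x m ≤ cmpAngle y z x + A := by linarith [step1]
  -- Step 3: cosine comparison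
  have hcos : Real.cos (cmpAngle y z x) - A ≤ Real.cos (cmpAngle y x m) :=
    cos_mono_bound (cmpAngle_nonneg _ _ _) (cmpAngle_le_pi _ _ _)
      (cmpAngle_nonneg _ _ _) (cmpAngle_le_pi _ _ _) hA0 hθ
  have hcosφ : Real.cos (cmpAngle y z x) = (L ^ 2 + a ^ 2 - c ^ 2) / (2 * L * a) := by
    rw [cos_cmpAngle hyz hyx, ← hLdef, ← hadef, dist_comm z x, ← hcdef]
  have hlaw : w ^ 2 = a ^ 2 + b ^ 2 - 2 * a * b * Real.cos (cmpAngle y x m) :=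
    law_of_cos hyx hym
  have hmain : w ^ 2 ≤ a ^ 2 + b ^ 2 -
      2 * a * b * ((L ^ 2 + a ^ 2 - c ^ 2) / (2 * L * a) - A) := by
    rw [hlaw]
    have h2 : (L ^ 2 + a ^ 2 - c ^ 2) / (2 * L * a) - A ≤ Real.cos (cmpAngle y x m) := by
      rw [← hcosφ]; exact hcos
    have := mul_le_mul_of_nonneg_left h2 (by positivity : (0:ℝ) ≤ 2 * a * b)
    linarith
  have hquot : 2 * a * b * ((L ^ 2 + a ^ 2 - c ^ 2) / (2 * L * a)) =
      b * (L ^ 2 + a ^ 2 - c ^ 2) / L := by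
    field_simp
  have hmain2 : w ^ 2 ≤ a ^ 2 + b ^ 2 - b * (L ^ 2 + a ^ 2 - c ^ 2) / L + 2 * a * b * A := by
    rw [mul_sub, hquot] at hmain
    linarith
  -- Step 4: final algebra
  have hxyd : dist x y = a := dist_comm x y
  rw [hxyd]
  -- polynomial version of the final inequality
  have hi : 2*a*b*A*L ≤ a*(L+2*ε)*A*L := by
    have h0 : (0:ℝ) ≤ a*A*L*(L + 2*ε - 2*b) :=
      mul_nonneg (mul_nonneg (mul_nonneg ha.le hA0) hL.le) (by linarith)
    nlinarith [h0, sq_nonneg (1:ℝ)]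
  have hii : - (b * (L ^ 2 + a ^ 2 - c ^ 2)) ≤
      - ((L ^ 2 + a ^ 2 - c ^ 2) * (L / 2)) + (a ^ 2 + L ^ 2 + c ^ 2) * ε := by
    rcases le_or_gt 0 (L ^ 2 + a ^ 2 - c ^ 2) with hu | hu
    · have p1 : (0:ℝ) ≤ (L ^ 2 + a ^ 2 - c ^ 2) * (ε - (L/2 - b)) :=
        mul_nonneg hu (by linarith)
      have p2 : (0:ℝ) ≤ 2*c^2*ε := by positivity
      nlinarith [p1, p2]
    · have p1 : (0:ℝ) ≤ (-(L ^ 2 + a ^ 2 - c ^ 2)) * (L/2 - b + ε) :=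
        mul_nonneg (by linarith) (by linarith)
      have p2 : (0:ℝ) ≤ (2*a^2 + 2*L^2)*ε := by positivity
      nlinarith [p1, p2]
  have hiii : b ^ 2 * L ≤ (L/2 + ε) ^ 2 * L := by
    have h0 : (0:ℝ) ≤ ((L/2+ε-b) * (L/2+ε+b)) * L :=
      mul_nonneg (mul_nonneg (by linarith) (by linarith)) hL.le
    nlinarith [h0]
  have hP : (a^2 + b^2 + 2*a*b*A) * L - b * (L ^ 2 + a ^ 2 - c ^ 2) ≤
      (a^2/2 + c^2/2 - L^2/4 + (L*ε + ε^2 + a*(L+2*ε)*A)) * L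
        + (a^2 + L^2 + c^2) * ε := by linarith [hi, hii, hiii]
  -- divide back by L
  set S : ℝ := b * (L ^ 2 + a ^ 2 - c ^ 2) / L with hSdef
  set T : ℝ := (a ^ 2 + L ^ 2 + c ^ 2) * ε / L with hTdef
  have hSL : S * L = b * (L ^ 2 + a ^ 2 - c ^ 2) := div_mul_cancel₀ _ hL.ne'
  have hTL : T * L = (a ^ 2 + L ^ 2 + c ^ 2) * ε := div_mul_cancel₀ _ hL.ne'
  have hfin : (a ^ 2 + b ^ 2 - S + 2 * a * b * A) * L ≤
      (a ^ 2 / 2 + c ^ 2 / 2 - L ^ 2 / 4 + (L * ε + ε ^ 2 + T + a * (L + 2 * ε) * A)) * L := by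
    have e1 : (a ^ 2 + b ^ 2 - S + 2 * a * b * A) * L =
        (a^2 + b^2 + 2*a*b*A) * L - S * L := by ring
    have e2 : (a ^ 2 / 2 + c ^ 2 / 2 - L ^ 2 / 4 + (L * ε + ε ^ 2 + T + a * (L + 2 * ε) * A)) * L =
        (a^2/2 + c^2/2 - L^2/4 + (L*ε + ε^2 + a*(L+2*ε)*A)) * L + T * L := by ring
    rw [e1, e2, hSL, hTL]
    exact hP
  exact hmain2.trans (le_of_mul_le_mul_right hfin hL)

lemma CBBkey {U : Type*} [MetricSpace U] (hcat : CAT0Cmp U) (y z : U) (hyz : y ≠ z)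
    (R δ : ℝ) (hR : 0 ≤ R) (hδ : 0 < δ) :
    ∃ ε > 0, ∀ x m : U, dist y x ≤ R → dist z x ≤ R →
      dist y m ≤ dist y z / 2 + ε → dist m z ≤ dist y z / 2 + ε →
      dist x m ^ 2 ≤ dist x y ^ 2 / 2 + dist x z ^ 2 / 2 - dist y z ^ 2 / 4 + δ := by
  set L : ℝ := dist y z with hLdef
  have hL : 0 < L := dist_pos.2 hyz
  set E : ℝ → ℝ := fun ε => L * ε + ε ^ 2 + (R ^ 2 + L ^ 2 + R ^ 2) * ε / L
      + R * (L + 2 * ε) * Real.arccos ((L / 2 - ε) / (L / 2 + ε)) with hEdef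
  have hg : ContinuousAt (fun ε : ℝ => (L / 2 - ε) / (L / 2 + ε)) 0 := by
    apply ContinuousAt.div
    · fun_prop
    · fun_prop
    · simp only [add_zero]
      positivity
  have harc : ContinuousAt (fun ε : ℝ => Real.arccos ((L / 2 - ε) / (L / 2 + ε))) 0 :=
    Real.continuous_arccos.continuousAt.comp hg
  have hcont : ContinuousAt E 0 := by
    have e1 : E = fun ε => L * ε + ε ^ 2 + ((R ^ 2 + L ^ 2 + R ^ 2) / L) * ε
        + (R * (L + 2 * ε)) * Real.arccos ((L / 2 - ε) / (L / 2 + ε)) := by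
      funext ε; rw [hEdef]; ring
    rw [e1]
    apply ContinuousAt.add
    · fun_prop
    · exact ContinuousAt.mul (by fun_prop) harc
  have hE0 : E 0 = 0 := by
    have h1 : (L / 2 - 0) / (L / 2 + 0) = 1 := by
      rw [sub_zero, add_zero, div_self (ne_of_gt (by positivity : (0:ℝ) < L / 2))]
    rw [hEdef]; dsimp only; rw [h1, Real.arccos_one]; ring
  have hten : Filter.Tendsto E (nhds 0) (nhds 0) := by
    have := hcont.tendsto
    rwa [hE0] at this
  have ev1 : ∀ᶠ ε in nhds (0 : ℝ), E ε < δ := hten.eventually (gt_mem_nhds hδ)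
  have ev2 : ∀ᶠ ε in nhds (0 : ℝ), ε < L / 2 := gt_mem_nhds (by positivity)
  have ev3 : ∀ᶠ ε in nhdsWithin (0 : ℝ) (Set.Ioi 0), (0:ℝ) < ε :=
    eventually_mem_nhdsWithin
  have hcomb : ∀ᶠ ε in nhdsWithin (0 : ℝ) (Set.Ioi 0),
      E ε < δ ∧ ε < L / 2 ∧ (0:ℝ) < ε :=
    ((ev1.filter_mono nhdsWithin_le_nhds).and
      ((ev2.filter_mono nhdsWithin_le_nhds).and ev3))
  obtain ⟨ε, hEδ, hεL, hε⟩ := hcomb.exists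
  refine ⟨ε, hε, ?_⟩
  intro x m hyxR hzxR hm1 hm2
  clear_value E
  have harc0 : 0 ≤ Real.arccos ((L / 2 - ε) / (L / 2 + ε)) := Real.arccos_nonneg _
  have hEge : L * ε + ε ^ 2 ≤ E ε := by
    have h1 : 0 ≤ (R ^ 2 + L ^ 2 + R ^ 2) * ε / L := by positivity
    have h2 : 0 ≤ R * (L + 2 * ε) * Real.arccos ((L / 2 - ε) / (L / 2 + ε)) :=
      mul_nonneg (mul_nonneg hR (by linarith)) harc0
    rw [hEdef]; dsimp only; linarith
  have bnd : ∀ a c : ℝ, a ≤ R → c ≤ R → 0 ≤ a → 0 ≤ c →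
      L * ε + ε ^ 2 + (a ^ 2 + L ^ 2 + c ^ 2) * ε / L
        + a * (L + 2 * ε) * Real.arccos ((L / 2 - ε) / (L / 2 + ε)) ≤ E ε := by
    intro a c haR hcR ha0 hc0
    rw [hEdef]; dsimp only
    have e1 : (a ^ 2 + L ^ 2 + c ^ 2) * ε / L ≤ (R ^ 2 + L ^ 2 + R ^ 2) * ε / L := by
      apply (div_le_div_iff_of_pos_right hL).mpr
      have q1 : a ^ 2 ≤ R ^ 2 := pow_le_pow_left₀ ha0 haR 2
      have q2 : c ^ 2 ≤ R ^ 2 := pow_le_pow_left₀ hc0 hcR 2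
      nlinarith [hε.le]
    have e2 : a * (L + 2 * ε) * Real.arccos ((L / 2 - ε) / (L / 2 + ε)) ≤
        R * (L + 2 * ε) * Real.arccos ((L / 2 - ε) / (L / 2 + ε)) := by
      apply mul_le_mul_of_nonneg_right _ harc0
      exact mul_le_mul_of_nonneg_right haR (by linarith)
    linarith
  by_cases hx1 : x = y
  · have h2 : dist x z = L := by rw [hLdef, hx1]
    have h3 : dist x y = 0 := by rw [hx1, dist_self]
    have h4 : dist x m ≤ L / 2 + ε := by rw [hx1]; exact hm1
    rw [h2, h3]
    nlinarith [hEδ, hEge, dist_nonneg (x := x) (y := m)]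
  by_cases hx2 : x = z
  · have h2 : dist x y = L := by rw [hLdef, hx2, dist_comm]
    have h3 : dist x z = 0 := by rw [hx2, dist_self]
    have h4 : dist x m ≤ L / 2 + ε := by rw [hx2, dist_comm]; exact hm2
    rw [h2, h3]
    nlinarith [hEδ, hEge, dist_nonneg (x := x) (y := m)]
  -- main case
  have htri : L ≤ dist y m + dist m z := dist_triangle y m z
  have hym : y ≠ m := dist_pos.1 (by linarith)
  have hzm : z ≠ m := dist_pos.1 (by rw [dist_comm z m]; linarith)
  have hyx : y ≠ x := fun h => hx1 h.symm
  have hzx : z ≠ x := fun h => hx2 h.symm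
  rcases hcat y z x m hyz hyx hym hzx hzm with hc | hc
  · have h := oneSide hyz hx1 hym hε hεL hm1 hm2 hc
    rw [← hLdef] at h
    have hb := bnd (dist y x) (dist x z) hyxR (by rw [dist_comm x z]; exact hzxR)
      dist_nonneg dist_nonneg
    linarith
  · have hm1' : dist z m ≤ dist z y / 2 + ε := by
      rw [dist_comm z m, dist_comm z y]; exact hm2
    have hm2' : dist m y ≤ dist z y / 2 + ε := by
      rw [dist_comm m y, dist_comm z y]; exact hm1
    have hεL' : ε < dist z y / 2 := by rw [dist_comm z y]; exact hεL
    have h := oneSide hyz.symm hx2 hzm hε hεL' hm1' hm2' hc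
    rw [dist_comm z y] at h
    rw [← hLdef] at h
    have hb := bnd (dist z x) (dist x y) hzxR (by rw [dist_comm x y]; exact hyxR)
      dist_nonneg dist_nonneg
    linarith

lemma exists_good_midpoint {U : Type*} [MetricSpace U] [CompleteSpace U]
    (hlen : LengthMid U) (hcat : CAT0Cmp U) (y z : U) :
    ∃ m : U, dist y m = dist y z / 2 ∧ dist m z = dist y z / 2 ∧
      ∀ x : U, dist x m ^ 2 ≤ dist x y ^ 2 / 2 + dist x z ^ 2 / 2 - dist y z ^ 2 / 4 := by
  by_cases hyz : y = z
  · subst hyz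
    refine ⟨y, by simp, by simp, ?_⟩
    intro x
    have : (0:ℝ) ≤ dist x y ^ 2 := by positivity
    simp only [dist_self]
    linarith
  · set L : ℝ := dist y z with hLdef
    have hL : 0 < L := dist_pos.2 hyz
    have hmid : ∀ n : ℕ, ∃ w : U,
        dist y w ≤ L / 2 + 1 / (n + 1) ∧ dist w z ≤ L / 2 + 1 / (n + 1) := by
      intro n
      exact hlen y z _ (by positivity)
    choose c hc1 hc2 using hmid
    have hen1 : ∀ n : ℕ, 1 / ((n:ℝ) + 1) ≤ 1 := by
      intro n
      rw [div_le_one (by positivity)]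
      linarith [Nat.cast_nonneg (α := ℝ) n]
    have hR1 : ∀ n : ℕ, dist y (c n) ≤ L / 2 + 1 := fun n => (hc1 n).trans (by linarith [hen1 n])
    have hR2 : ∀ n : ℕ, dist z (c n) ≤ L / 2 + 1 := by
      intro n
      rw [dist_comm z (c n)]
      exact (hc2 n).trans (by linarith [hen1 n])
    have hcauchy : CauchySeq c := by
      rw [Metric.cauchySeq_iff]
      intro δ hδ
      obtain ⟨ε, hε, hkey⟩ := CBBkey hcat y z hyz (L / 2 + 1) (δ ^ 2 / 2)
        (by positivity) (by positivity)
      obtain ⟨N, hN⟩ := exists_nat_one_div_lt (lt_min hε (by positivity :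
        (0:ℝ) < δ ^ 2 / (4 * (L + 1))))
      refine ⟨N, fun p hp q hq => ?_⟩
      have hmono : ∀ k : ℕ, N ≤ k → 1 / ((k:ℝ) + 1) ≤ 1 / ((N:ℝ) + 1) := by
        intro k hk
        apply div_le_div_of_nonneg_left (by norm_num) (by positivity)
        have : (N:ℝ) ≤ (k:ℝ) := Nat.cast_le.2 hk
        linarith
      have heps : ∀ k : ℕ, N ≤ k → 1 / ((k:ℝ) + 1) ≤ ε := by
        intro k hk
        exact (hmono k hk).trans (le_of_lt (lt_of_lt_of_le hN (min_le_left _ _)))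
      have hsml : 1 / ((N:ℝ) + 1) ≤ δ ^ 2 / (4 * (L + 1)) :=
        le_of_lt (lt_of_lt_of_le hN (min_le_right _ _))
      have hq1 : dist y (c q) ≤ L / 2 + ε := (hc1 q).trans (by linarith [heps q hq])
      have hq2 : dist (c q) z ≤ L / 2 + ε := (hc2 q).trans (by linarith [heps q hq])
      have h := hkey (c p) (c q) (hR1 p) (hR2 p) hq1 hq2
      have hp1 : dist (c p) y ≤ L / 2 + 1 / ((N:ℝ) + 1) := by
        rw [dist_comm (c p) y]
        exact (hc1 p).trans (by linarith [hmono p hp])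
      have hp2 : dist (c p) z ≤ L / 2 + 1 / ((N:ℝ) + 1) := by
        exact (hc2 p).trans (by linarith [hmono p hp])
      rw [← hLdef] at h
      have hsq : dist (c p) (c q) ^ 2 < δ ^ 2 := by
        have e1 : 0 ≤ dist (c p) y := dist_nonneg
        have e2 : 0 ≤ dist (c p) z := dist_nonneg
        have e3 : (0:ℝ) < 1 / ((N:ℝ) + 1) := by positivity
        have e4 : 1 / ((N:ℝ) + 1) ≤ 1 := hen1 N
        have hsml' : 1 / ((N:ℝ) + 1) * (4 * (L + 1)) ≤ δ ^ 2 :=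
          (le_div_iff₀ (by positivity)).1 hsml
        nlinarith [h, mul_self_le_mul_self e1 hp1, mul_self_le_mul_self e2 hp2, hsml', hL]
      nlinarith [hsq, dist_nonneg (x := c p) (y := c q), hδ]
    obtain ⟨m, hm⟩ := cauchySeq_tendsto_of_complete hcauchy
    have hlim0 : Filter.Tendsto (fun n : ℕ => 1 / ((n:ℝ) + 1)) Filter.atTop (nhds 0) :=
      tendsto_one_div_add_atTop_nhds_zero_nat
    have hlo : ∀ n : ℕ, L / 2 - 1 / ((n:ℝ) + 1) ≤ dist y (c n) := by
      intro n
      have := dist_triangle y (c n) z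
      linarith [hc2 n]
    have hlo2 : ∀ n : ℕ, L / 2 - 1 / ((n:ℝ) + 1) ≤ dist (c n) z := by
      intro n
      have := dist_triangle y (c n) z
      linarith [hc1 n]
    have hym : dist y m = L / 2 := by
      refine tendsto_nhds_unique (tendsto_const_nhds.dist hm) ?_
      have t1 : Filter.Tendsto (fun n : ℕ => L / 2 - 1 / ((n:ℝ) + 1)) Filter.atTop (nhds (L/2)) := by
        simpa using tendsto_const_nhds.sub hlim0
      have t2 : Filter.Tendsto (fun n : ℕ => L / 2 + 1 / ((n:ℝ) + 1)) Filter.atTop (nhds (L/2)) := by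
        simpa using tendsto_const_nhds.add hlim0
      exact tendsto_of_tendsto_of_tendsto_of_le_of_le t1 t2 hlo hc1
    have hmz : dist m z = L / 2 := by
      refine tendsto_nhds_unique (hm.dist tendsto_const_nhds) ?_
      have t1 : Filter.Tendsto (fun n : ℕ => L / 2 - 1 / ((n:ℝ) + 1)) Filter.atTop (nhds (L/2)) := by
        simpa using tendsto_const_nhds.sub hlim0
      have t2 : Filter.Tendsto (fun n : ℕ => L / 2 + 1 / ((n:ℝ) + 1)) Filter.atTop (nhds (L/2)) := by
        simpa using tendsto_const_nhds.add hlim0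
      exact tendsto_of_tendsto_of_tendsto_of_le_of_le t1 t2 hlo2 hc2
    refine ⟨m, hym, hmz, ?_⟩
    intro x
    by_contra hlt
    push_neg at hlt
    set δ : ℝ := (dist x m ^ 2 - (dist x y ^ 2 / 2 + dist x z ^ 2 / 2 - L ^ 2 / 4)) / 2 with hδdef
    have hδ : 0 < δ := by rw [hδdef]; linarith
    obtain ⟨ε, hε, hkey⟩ := CBBkey hcat y z hyz (max (dist y x) (dist z x)) δ
      (le_trans dist_nonneg (le_max_left _ _)) hδ
    have h := hkey x m (le_max_left _ _) (le_max_right _ _)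
      (by rw [hym]; linarith) (by rw [hmz]; linarith)
    rw [← hLdef] at h
    rw [hδdef] at h
    linarith

theorem helly_CAT0 {U : Type*} [MetricSpace U] [CompleteSpace U]
    (hlen : LengthMid U) (hcat : CAT0Cmp U)
    {ι : Type*} (K : ι → Set U)
    (hcl : ∀ α, IsClosed (K α)) (hbd : ∀ α, Bornology.IsBounded (K α))
    (hcv : ∀ α, MConvexSet (K α))
    (hem : (⋂ α, K α) = ∅) :
    ∃ s : Finset ι, (⋂ α ∈ s, K α) = ∅ := by
  classical
  by_contra hfin
  push_neg at hfin
  have hne : ∀ s : Finset ι, (⋂ α ∈ s, K α).Nonempty := hfin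
  rcases isEmpty_or_nonempty ι with hι | hι
  · have h1 : (⋂ α, K α) = Set.univ := Set.iInter_of_empty K
    obtain ⟨u, _⟩ := hne ∅
    have : u ∈ (∅ : Set U) := by
      rw [← hem, h1]; trivial
    exact this
  · obtain ⟨α₀⟩ := hι
    set C : Finset ι → Set U := fun s => ⋂ α ∈ s, K α with hCdef
    have hCne : ∀ s, (C s).Nonempty := hne
    have hCmono : ∀ {s t : Finset ι}, s ⊆ t → C t ⊆ C s := by
      intro s t hst u hu
      rw [Set.mem_iInter₂] at hu ⊢
      exact fun α hα => hu α (hst hα)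
    have hCconv : ∀ s, MConvexSet (C s) := by
      intro s a ha b hb w hw
      rw [Set.mem_iInter₂] at ha hb ⊢
      exact fun α hα => hcv α a (ha α hα) b (hb α hα) w hw
    have hCK : ∀ (s : Finset ι) (α) (hα : α ∈ s), C s ⊆ K α := by
      intro s α hα u hu
      rw [Set.mem_iInter₂] at hu
      exact hu α hα
    obtain ⟨p, hp⟩ := hCne {α₀}
    have hpK : p ∈ K α₀ := hCK _ α₀ (Finset.mem_singleton_self α₀) hp
    set d : Finset ι → ℝ := fun s => Metric.infDist p (C s) with hddef
    have hd0 : ∀ s, 0 ≤ d s := fun s => Metric.infDist_nonneg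
    have hdB : ∀ s, d s ≤ Metric.diam (K α₀) := by
      intro s
      obtain ⟨q, hq⟩ := hCne (insert α₀ s)
      have hqs : q ∈ C s := hCmono (Finset.subset_insert α₀ s) hq
      have hqK : q ∈ K α₀ := hCK _ α₀ (Finset.mem_insert_self α₀ s) hq
      exact (Metric.infDist_le_dist_of_mem hqs).trans
        (Metric.dist_le_diam_of_mem (hbd α₀) hpK hqK)
    have hdmono : ∀ {s t : Finset ι}, s ⊆ t → d s ≤ d t :=
      fun {s t} hst => Metric.infDist_le_infDist_of_subset (hCmono hst) (hCne t)
    set D : ℝ := sSup (Set.range d) with hDdef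
    have hbdd : BddAbove (Set.range d) := by
      refine ⟨Metric.diam (K α₀), ?_⟩
      rintro _ ⟨s, rfl⟩
      exact hdB s
    have hdD : ∀ s, d s ≤ D := fun s => le_csSup hbdd ⟨s, rfl⟩
    have hD0 : 0 ≤ D := le_trans (hd0 ∅) (hdD ∅)
    -- choose nearly optimal finite sets
    have hssup : ∀ n : ℕ, ∃ s : Finset ι, D - 1 / (n + 1) < d s := by
      intro n
      obtain ⟨_, ⟨s, rfl⟩, hs⟩ := exists_lt_of_lt_csSup
        (Set.range_nonempty d) (sub_lt_self D (by positivity : (0:ℝ) < 1/((n:ℝ)+1)))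
      exact ⟨s, hs⟩
    choose s hs using hssup
    set t : ℕ → Finset ι := fun n => (Finset.range (n + 1)).sup s with htdef
    have hst : ∀ n, s n ⊆ t n := fun n =>
      Finset.le_iff_subset.1 (Finset.le_sup (Finset.mem_range.2 n.lt_succ_self))
    have htmono : ∀ {n k : ℕ}, n ≤ k → t n ⊆ t k := by
      intro n k hnk
      apply Finset.le_iff_subset.1
      apply Finset.sup_mono
      rw [Finset.range_subset_range]
      omega
    have hdt : ∀ n : ℕ, D - 1 / (n + 1) < d (t n) :=
      fun n => lt_of_lt_of_le (hs n) (hdmono (hst n))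
    -- choose nearly closest points
    have hxex : ∀ (s' : Finset ι) (e : ℝ), 0 < e → ∃ u ∈ C s', dist p u < d s' + e := by
      intro s' e he
      exact (Metric.infDist_lt_iff (hCne s')).1 (by linarith [hd0 s'])
    -- the key contraction estimate
    have hkey : ∀ (s' : Finset ι) (a b : U) (e : ℝ), 0 < e → a ∈ C s' → b ∈ C s' →
        dist p a ≤ d s' + e → dist p b ≤ D + e → D - e ≤ d s' →
        dist a b ^ 2 ≤ 12 * D * e + 4 * e ^ 2 := by
      intro s' a b e he ha hb hpa hpb hDe
      obtain ⟨m, hm1, hm2, hmineq⟩ := exists_good_midpoint hlen hcat a b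
      have hmC : m ∈ C s' := hCconv s' a ha b hb m (by rw [hm1, hm2]; ring)
      have hdm : d s' ≤ dist p m := Metric.infDist_le_dist_of_mem hmC
      have hineq := hmineq p
      have h1 : 0 ≤ d s' := hd0 s'
      have h2 : d s' ≤ D := hdD s'
      have h3 : 0 ≤ dist p a := dist_nonneg
      have h4 : 0 ≤ dist p b := dist_nonneg
      nlinarith [mul_self_le_mul_self h3 hpa, mul_self_le_mul_self h4 hpb,
        mul_self_le_mul_self h1 hdm, hineq, hDe, h2, hD0, he.le]
    -- construct the Cauchy sequence
    have hxch : ∀ n : ℕ, ∃ u ∈ C (t n), dist p u < d (t n) + 1 / (n + 1) := by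
      intro n
      exact hxex (t n) _ (by positivity)
    choose x hxC hxd using hxch
    have hcauchy : CauchySeq x := by
      rw [Metric.cauchySeq_iff]
      intro δ hδ
      obtain ⟨N, hN⟩ := exists_nat_one_div_lt
        (by positivity : (0:ℝ) < δ ^ 2 / (12 * D + 4))
      refine ⟨N, fun a ha b hb => ?_⟩
      wlog hab : a ≤ b generalizing a b
      · rw [dist_comm]
        exact this b hb a ha (by omega)
      have he : (0:ℝ) < 1 / ((a:ℝ) + 1) := by positivity
      have hxbC : x b ∈ C (t a) := hCmono (htmono hab) (hxC b)
      have heb : 1 / ((b:ℝ)+1) ≤ 1 / ((a:ℝ)+1) := by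
        apply div_le_div_of_nonneg_left (by norm_num) (by positivity)
        have : (a:ℝ) ≤ (b:ℝ) := Nat.cast_le.2 hab
        linarith
      have hsq := hkey (t a) (x a) (x b) (1 / ((a:ℝ)+1)) he (hxC a) hxbC
        (le_of_lt (hxd a))
        (by
          have := hxd b
          have := hdD (t b)
          linarith)
        (le_of_lt (hdt a))
      have hea : 1 / ((a:ℝ)+1) ≤ 1 / ((N:ℝ)+1) := by
        apply div_le_div_of_nonneg_left (by norm_num) (by positivity)
        have : (N:ℝ) ≤ (a:ℝ) := Nat.cast_le.2 ha
        linarith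
      have hN' : 1 / ((N:ℝ)+1) * (12 * D + 4) < δ ^ 2 :=
        (lt_div_iff₀ (by positivity)).1 hN
      have he1 : 1 / ((a:ℝ)+1) ≤ 1 := by
        rw [div_le_one (by positivity)]
        linarith [Nat.cast_nonneg (α := ℝ) a]
      have : dist (x a) (x b) ^ 2 < δ ^ 2 := by nlinarith [hD0]
      nlinarith [dist_nonneg (x := x a) (y := x b), hδ]
    obtain ⟨w, hw⟩ := cauchySeq_tendsto_of_complete hcauchy
    -- w belongs to every K α
    have hwK : ∀ α, w ∈ K α := by
      intro α
      have hyex : ∀ n : ℕ, ∃ u ∈ C (insert α (t n)),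
          dist p u < d (insert α (t n)) + 1 / (n + 1) := by
        intro n
        exact hxex _ _ (by positivity)
      choose y hyC hyd using hyex
      have hyK : ∀ n, y n ∈ K α := fun n => hCK _ α (Finset.mem_insert_self _ _) (hyC n)
      have hclose : ∀ n : ℕ, dist (x n) (y n) ^ 2 ≤ 12 * D * (1/((n:ℝ)+1)) + 4 * (1/((n:ℝ)+1)) ^ 2 := by
        intro n
        have he : (0:ℝ) < 1 / ((n:ℝ) + 1) := by positivity
        have hynC : y n ∈ C (t n) := hCmono (Finset.subset_insert α (t n)) (hyC n)
        exact hkey (t n) (x n) (y n) _ he (hxC n) hynC (le_of_lt (hxd n))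
          (by
            have := hyd n
            have := hdD (insert α (t n))
            linarith)
          (le_of_lt (hdt n))
      -- y n → w
      have hlim0 : Filter.Tendsto (fun n : ℕ => 1 / ((n:ℝ) + 1)) Filter.atTop (nhds 0) :=
        tendsto_one_div_add_atTop_nhds_zero_nat
      have hxy0 : Filter.Tendsto (fun n => dist (x n) (y n)) Filter.atTop (nhds 0) := by
        have hsq : Filter.Tendsto (fun n => dist (x n) (y n) ^ 2) Filter.atTop (nhds 0) := by
          have hub : Filter.Tendsto (fun n : ℕ => (12 * D + 4) * (1/((n:ℝ)+1)))
              Filter.atTop (nhds 0) := by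
            simpa using tendsto_const_nhds.mul hlim0
          refine tendsto_of_tendsto_of_tendsto_of_le_of_le tendsto_const_nhds hub
            (fun n => sq_nonneg _) (fun n => ?_)
          have he1 : 1 / ((n:ℝ)+1) ≤ 1 := by
            rw [div_le_one (by positivity)]
            linarith [Nat.cast_nonneg (α := ℝ) n]
          have he0 : (0:ℝ) ≤ 1 / ((n:ℝ)+1) := by positivity
          nlinarith [hclose n, hD0]
        have h2 : Filter.Tendsto (fun n => Real.sqrt (dist (x n) (y n) ^ 2))
            Filter.atTop (nhds (Real.sqrt 0)) :=
          (Real.continuous_sqrt.tendsto 0).comp hsq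
        simpa [Real.sqrt_sq (dist_nonneg (x := x _) (y := y _)), Real.sqrt_zero] using h2
      have hxw0 : Filter.Tendsto (fun n => dist (x n) w) Filter.atTop (nhds 0) :=
        tendsto_iff_dist_tendsto_zero.1 hw
      have hyw : Filter.Tendsto y Filter.atTop (nhds w) := by
        rw [tendsto_iff_dist_tendsto_zero]
        have hub : Filter.Tendsto (fun n => dist (x n) (y n) + dist (x n) w)
            Filter.atTop (nhds 0) := by
          simpa using hxy0.add hxw0
        refine tendsto_of_tendsto_of_tendsto_of_le_of_le tendsto_const_nhds hub
          (fun n => dist_nonneg) (fun n => ?_)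
        calc dist (y n) w ≤ dist (y n) (x n) + dist (x n) w := dist_triangle _ _ _
          _ = dist (x n) (y n) + dist (x n) w := by rw [dist_comm (y n) (x n)]
      exact (hcl α).mem_of_tendsto hyw (Filter.Eventually.of_forall hyK)
    have : w ∈ (∅ : Set U) := by
      rw [← hem]
      exact Set.mem_iInter.2 hwK
    exact this
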